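/- arXiv:1707.09249 — 2 statements merged into one kernel-verified Lean document; each statement's English description precedes it below -/
import Mathlib

section
/- Every inner product on the (m-1)-th exterior power ∧^{m-1}V of an m-dimensional real inner product space V is induced by some inner product on V; that is, for any inner product [·,·]_{**} on ∧^{m-1}V there exists an inner product [·,·] on V such that [u₁∧...∧u_{m-1}, v₁∧...∧v_{m-1}]_{**} = det([u_i,v_j])_{(m-1)×(m-1)}. -/
open ExteriorAlgebra
open scoped RealInnerProductSpace

open ExteriorAlgebra

/-- The wedge `u₁ ∧ ... ∧ u_{m-1}`, as an element of `⋀[ℝ]^(m-1) V`. -/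
noncomputable def wedgeP {V : Type*} [AddCommGroup V] [Module ℝ V] (k : ℕ)
    (u : Fin k → V) : ⋀[ℝ]^k V :=
  ⟨ιMulti ℝ k u, ιMulti_range ℝ k (Set.mem_range_self u)⟩

namespace Stmt5Aux

variable {V : Type*} [AddCommGroup V] [Module ℝ V]

noncomputable def wedgeP' (k : ℕ) (u : Fin k → V) : ⋀[ℝ]^k V :=
  ⟨ιMulti ℝ k u, ιMulti_range ℝ k (Set.mem_range_self u)⟩

/-- `ιMulti` corestricted to the exterior power, as an alternating map. -/
noncomputable def wedgeAlt (k : ℕ) : V [⋀^Fin k]→ₗ[ℝ] ⋀[ℝ]^k V :=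
  (ιMulti ℝ k).codRestrict _ (fun u => ιMulti_range ℝ k (Set.mem_range_self u))

lemma wedgeAlt_apply (k : ℕ) (u : Fin k → V) : wedgeAlt k u = wedgeP' k u := rfl

variable (n : ℕ) (e : Module.Basis (Fin (n + 1)) ℝ V)

/-- The determinant-type alternating form associated to deleting index `j`. -/
noncomputable def fj (j : Fin (n + 1)) : AlternatingMap ℝ V ℝ (Fin n) :=
  (Matrix.detRowAlternating).compLinearMap (LinearMap.pi fun l => e.coord (j.succAbove l))

lemma fj_apply (j : Fin (n + 1)) (u : Fin n → V) :
    fj n e j u = Matrix.det (Matrix.of fun k l => e.repr (u k) (j.succAbove l)) := rfl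

/-- The dual functionals on the exterior power. -/
noncomputable def phi (j : Fin (n + 1)) : (⋀[ℝ]^n V) →ₗ[ℝ] ℝ :=
  (ExteriorAlgebra.liftAlternating
    (fun i => if h : n = i then h ▸ fj n e j else 0)).comp (Submodule.subtype _)

lemma phi_wedge (j : Fin (n + 1)) (u : Fin n → V) :
    phi n e j (wedgeP' n u) = fj n e j u := by
  simp only [phi, LinearMap.comp_apply, Submodule.subtype_apply]
  have : ((wedgeP' n u : ⋀[ℝ]^n V) : ExteriorAlgebra ℝ V) = ιMulti ℝ n u := rfl
  rw [this, ExteriorAlgebra.liftAlternating_apply_ιMulti, dif_pos rfl]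

/-- The wedge-products of basis vectors with one deleted index. -/
noncomputable def wB (i : Fin (n + 1)) : ⋀[ℝ]^n V :=
  wedgeP' n (fun k => e (i.succAbove k))

lemma fj_basis (j i : Fin (n + 1)) :
    fj n e j (fun k => e (i.succAbove k)) = if j = i then 1 else 0 := by
  rw [fj_apply]
  have hentry : ∀ k l, e.repr (e (i.succAbove k)) (j.succAbove l)
      = if i.succAbove k = j.succAbove l then (1:ℝ) else 0 := by
    intro k l
    rw [e.repr_self]
    simp [Finsupp.single_apply]
  by_cases hji : j = i
  · subst hji
    have : (Matrix.of fun k l => e.repr (e (j.succAbove k)) (j.succAbove l)) = 1 := by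
      ext k l
      rw [Matrix.of_apply, hentry, Matrix.one_apply]
      simp [Fin.succAbove_right_injective.eq_iff]
    rw [this, Matrix.det_one, if_pos rfl]
  · obtain ⟨k₀, hk₀⟩ := Fin.exists_succAbove_eq (show j ≠ i from hji)
    rw [if_neg hji]
    apply Matrix.det_eq_zero_of_row_eq_zero k₀
    intro l
    rw [Matrix.of_apply, hentry, hk₀, if_neg (Fin.succAbove_ne j l).symm]

lemma phi_wB (j i : Fin (n + 1)) : phi n e j (wB n e i) = if j = i then 1 else 0 := by
  rw [wB, phi_wedge, fj_basis]


/-- Any injective `g : Fin n → Fin (n+1)` factors as `succAbove` composed with a permutation. -/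
lemma exists_factor {n : ℕ} {g : Fin n → Fin (n + 1)} (hg : Function.Injective g) :
    ∃ (i : Fin (n + 1)) (π : Equiv.Perm (Fin n)), g = fun k => i.succAbove (π k) := by
  have hns : ¬ Function.Surjective g := by
    intro h
    have := Fintype.card_le_of_surjective g h
    simp at this
  rw [Function.Surjective] at hns
  push_neg at hns
  obtain ⟨i, hi⟩ := hns
  have hex : ∀ k, ∃ z, i.succAbove z = g k := fun k =>
    Fin.exists_succAbove_eq (fun h => hi k h)
  choose π₀ hπ₀ using hex
  have hπ₀inj : Function.Injective π₀ := by
    intro a b hab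
    apply hg
    rw [← hπ₀ a, ← hπ₀ b, hab]
  obtain ⟨hinj, hsurj⟩ := (Finite.injective_iff_bijective).mp hπ₀inj
  refine ⟨i, Equiv.ofBijective π₀ ⟨hinj, hsurj⟩, ?_⟩
  funext k
  exact (hπ₀ k).symm

lemma altSum_apply {α : Type*} {M N : Type*} [AddCommMonoid M] [Module ℝ M]
    [AddCommMonoid N] [Module ℝ N] {k : ℕ} (s : Finset α)
    (f : α → AlternatingMap ℝ M N (Fin k)) (v : Fin k → M) :
    (∑ a ∈ s, f a) v = ∑ a ∈ s, f a v := by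
  induction s using Finset.cons_induction with
  | empty => simp
  | cons a s ha ih => rw [Finset.sum_cons, Finset.sum_cons, AlternatingMap.add_apply, ih]

/-- Expansion of an arbitrary wedge in terms of the basis wedges. -/
lemma wedge_expand (u : Fin n → V) :
    wedgeP' n u = ∑ j, fj n e j u • wB n e j := by
  have key : wedgeAlt n = ∑ j, (LinearMap.toSpanSingleton ℝ _ (wB n e j)).compAlternatingMap
      (fj n e j) := by
    apply Module.Basis.ext_alternating e
    intro g hg
    obtain ⟨i, π, rfl⟩ := exists_factor hg
    have harg : (fun k => e (i.succAbove (π k))) = (fun k => e (i.succAbove k)) ∘ π := rfl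
    rw [harg, AlternatingMap.map_perm, altSum_apply]
    have hterm : ∀ j, ((LinearMap.toSpanSingleton ℝ _ (wB n e j)).compAlternatingMap
        (fj n e j)) ((fun k => e (i.succAbove k)) ∘ π)
        = Equiv.Perm.sign π • ((if j = i then (1:ℝ) else 0) • wB n e j) := by
      intro j
      rw [LinearMap.compAlternatingMap_apply, AlternatingMap.map_perm, fj_basis]
      rcases Int.units_eq_one_or (Equiv.Perm.sign π) with h | h <;>
        simp [h, LinearMap.toSpanSingleton_apply]
    rw [Finset.sum_congr rfl (fun j _ => hterm j), ← Finset.smul_sum]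
    congr 1
    rw [wedgeAlt_apply]
    simp [wB, ite_smul]
  have := congrFun (congrArg (fun (F : AlternatingMap ℝ V (⋀[ℝ]^n V) (Fin n)) =>
    (F : (Fin n → V) → ⋀[ℝ]^n V)) key) u
  rw [← wedgeAlt_apply, this, altSum_apply]
  refine Finset.sum_congr rfl (fun j _ => ?_)
  rw [LinearMap.compAlternatingMap_apply, LinearMap.toSpanSingleton_apply]


/-- Cofactor formula for the adjugate over `ℝ`. -/
lemma submatrix_det_eq_adjugate {n : ℕ} (A : Matrix (Fin (n + 1)) (Fin (n + 1)) ℝ)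
    (i j : Fin (n + 1)) :
    (A.submatrix j.succAbove i.succAbove).det
      = (-1 : ℝ) ^ ((i : ℕ) + (j : ℕ)) * A.adjugate i j := by
  rw [Matrix.adjugate_apply, Matrix.det_succ_row _ j]
  rw [Finset.sum_eq_single i]
  · rw [Matrix.updateRow_self]
    have hsub : (A.updateRow j (Pi.single i 1)).submatrix j.succAbove i.succAbove
        = A.submatrix j.succAbove i.succAbove := by
      ext k l
      simp only [Matrix.submatrix_apply]
      rw [Matrix.updateRow_ne (Fin.succAbove_ne j k)]
    rw [hsub, Pi.single_eq_same]
    have hpow : (-1 : ℝ) ^ ((i : ℕ) + (j : ℕ)) * (-1 : ℝ) ^ ((j : ℕ) + (i : ℕ)) = 1 := by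
      rw [← pow_add]
      exact Even.neg_one_pow ⟨(i : ℕ) + (j : ℕ), by ring⟩
    ring_nf
    ring_nf at hpow
    rw [mul_assoc, hpow, mul_one]
  · intro b _ hb
    rw [Matrix.updateRow_self, Pi.single_eq_of_ne hb]
    ring
  · intro h
    exact absurd (Finset.mem_univ i) h


section Final
variable {V : Type*} [AddCommGroup V] [Module ℝ V]

/-- The final assembly: if the two sides agree (diagonally) on the wedge basis of a basis `bv`,
they agree on all tuples. -/
lemma final (n : ℕ) (B₂ : (⋀[ℝ]^n V) →ₗ[ℝ] (⋀[ℝ]^n V) →ₗ[ℝ] ℝ)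
    (bv : Module.Basis (Fin (n + 1)) ℝ V) (B : V →ₗ[ℝ] V →ₗ[ℝ] ℝ) (δ : Fin (n + 1) → ℝ)
    (hcoreL : ∀ i j, B₂ (wedgeP' n (fun k => bv (i.succAbove k)))
      (wedgeP' n (fun k => bv (j.succAbove k))) = Matrix.diagonal δ i j)
    (hcoreR : ∀ i j, Matrix.det (Matrix.of fun k l =>
      B (bv (i.succAbove k)) (bv (j.succAbove l))) = Matrix.diagonal δ i j) :
    ∀ (x y : Fin n → V), B₂ (wedgeP' n x) (wedgeP' n y)
      = Matrix.det (Matrix.of fun k l => B (x k) (y l)) := by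
  have main : ∀ g h : Fin n → Fin (n + 1),
      B₂ (wedgeP' n (fun k => bv (g k))) (wedgeP' n (fun k => bv (h k)))
        = Matrix.det (Matrix.of fun k l => B (bv (g k)) (bv (h l))) := by
    intro g h
    by_cases hg : Function.Injective g
    · by_cases hh : Function.Injective h
      · obtain ⟨i, π, rfl⟩ := exists_factor hg
        obtain ⟨j, ρ, rfl⟩ := exists_factor hh
        have hL1 : wedgeP' n (fun k => bv (i.succAbove (π k)))
            = Equiv.Perm.sign π • wedgeP' n (fun k => bv (i.succAbove k)) := by
          rw [← wedgeAlt_apply, ← wedgeAlt_apply]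
          exact AlternatingMap.map_perm _ (fun k => bv (i.succAbove k)) π
        have hL2 : wedgeP' n (fun k => bv (j.succAbove (ρ k)))
            = Equiv.Perm.sign ρ • wedgeP' n (fun k => bv (j.succAbove k)) := by
          rw [← wedgeAlt_apply, ← wedgeAlt_apply]
          exact AlternatingMap.map_perm _ (fun k => bv (j.succAbove k)) ρ
        have hR : (Matrix.of fun k l => B (bv (i.succAbove (π k))) (bv (j.succAbove (ρ l))))
            = ((Matrix.of fun k l => B (bv (i.succAbove k)) (bv (j.succAbove l))).submatrix
              id ρ).submatrix π id := rfl
        rw [hL1, hL2, hR, Matrix.det_permute, Matrix.det_permute', hcoreR i j]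
        have hady := hcoreL i j
        rcases Int.units_eq_one_or (Equiv.Perm.sign π) with h1 | h1 <;>
          rcases Int.units_eq_one_or (Equiv.Perm.sign ρ) with h2 | h2 <;>
          rw [h1, h2] <;>
          simp only [one_smul, Units.neg_smul, map_neg, LinearMap.neg_apply, Units.val_neg,
            Units.val_one, Int.cast_one, Int.cast_neg, neg_neg, one_mul, neg_mul, mul_one,
            neg_inj] <;>
          exact hady
      · rw [Function.Injective] at hh
        push_neg at hh
        obtain ⟨k, k', hkk, hne⟩ := hh
        have h0 : wedgeP' n (fun l => bv (h l)) = 0 := by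
          rw [← wedgeAlt_apply]
          exact AlternatingMap.map_eq_zero_of_eq _ _ (by rw [hkk]) hne
        rw [h0, map_zero]
        symm
        apply Matrix.det_zero_of_column_eq hne
        intro l
        rw [Matrix.of_apply, Matrix.of_apply, hkk]
    · rw [Function.Injective] at hg
      push_neg at hg
      obtain ⟨k, k', hkk, hne⟩ := hg
      have h0 : wedgeP' n (fun l => bv (g l)) = 0 := by
        rw [← wedgeAlt_apply]
        exact AlternatingMap.map_eq_zero_of_eq _ _ (by rw [hkk]) hne
      rw [h0, map_zero, LinearMap.zero_apply]
      symm
      apply Matrix.det_zero_of_row_eq hne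
      funext l
      rw [Matrix.of_apply, Matrix.of_apply, hkk]
  have haux : ∀ (f : Fin n → Fin n → ℝ),
      Matrix.detRowAlternating (fun l => fun k => f k l) = Matrix.det (Matrix.of f) := by
    intro f
    have h1 : Matrix.detRowAlternating (fun l => fun k => f k l)
        = Matrix.det (Matrix.of fun l k => f k l) := rfl
    rw [h1, ← Matrix.det_transpose]
    congr 1
  have step1 : ∀ (g : Fin n → Fin (n + 1)) (y : Fin n → V),
      B₂ (wedgeP' n (fun k => bv (g k))) (wedgeP' n y)
        = Matrix.det (Matrix.of fun k l => B (bv (g k)) (y l)) := by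
    intro g y
    have hmaps : (B₂ (wedgeP' n (fun k => bv (g k)))).compAlternatingMap (wedgeAlt n)
        = Matrix.detRowAlternating.compLinearMap (LinearMap.pi fun k => B (bv (g k))) := by
      apply Module.Basis.ext_alternating bv
      intro h hh
      rw [LinearMap.compAlternatingMap_apply, wedgeAlt_apply,
        AlternatingMap.compLinearMap_apply, main g h]
      exact (haux (fun k l => B (bv (g k)) (bv (h l)))).symm
    have := DFunLike.congr_fun hmaps y
    rw [LinearMap.compAlternatingMap_apply, wedgeAlt_apply,
      AlternatingMap.compLinearMap_apply] at this
    rw [this]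
    exact haux (fun k l => B (bv (g k)) (y l))
  intro x y
  have hmaps : (B₂.flip (wedgeP' n y)).compAlternatingMap (wedgeAlt n)
      = Matrix.detRowAlternating.compLinearMap (LinearMap.pi fun l => B.flip (y l)) := by
    apply Module.Basis.ext_alternating bv
    intro g hg
    rw [LinearMap.compAlternatingMap_apply, wedgeAlt_apply,
      AlternatingMap.compLinearMap_apply, LinearMap.flip_apply, step1 g y]
    rfl
  have := DFunLike.congr_fun hmaps x
  rw [LinearMap.compAlternatingMap_apply, wedgeAlt_apply,
    AlternatingMap.compLinearMap_apply, LinearMap.flip_apply] at this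
  rw [this]
  rfl

end Final

end Stmt5Aux

/-- Every inner product on the `(m-1)`-th exterior power `⋀^{m-1}V` of an
`m`-dimensional real inner product space `V` is induced by some inner product on `V`:
for any inner product `[·,·]_{**}` on `⋀^{m-1}V` there is an inner product `[·,·]` on
`V` with `[u₁∧...∧u_{m-1}, v₁∧...∧v_{m-1}]_{**} = det([u_i,v_j])`. -/
theorem stmt5 {V : Type*} [NormedAddCommGroup V] [InnerProductSpace ℝ V]
    [FiniteDimensional ℝ V] (m : ℕ) (hm : 2 ≤ m) (hV : Module.finrank ℝ V = m)
    (B₂ : (⋀[ℝ]^(m - 1) V) →ₗ[ℝ] (⋀[ℝ]^(m - 1) V) →ₗ[ℝ] ℝ)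
    (hB₂symm : ∀ w w', B₂ w w' = B₂ w' w)
    (hB₂pos : ∀ w, w ≠ 0 → 0 < B₂ w w) :
    ∃ B : V →ₗ[ℝ] V →ₗ[ℝ] ℝ,
      (∀ x y : V, B x y = B y x) ∧
      (∀ x : V, x ≠ 0 → 0 < B x x) ∧
      (∀ u v : Fin (m - 1) → V,
        B₂ (wedgeP (m - 1) u) (wedgeP (m - 1) v) =
          Matrix.det (Matrix.of fun i j => B (u i) (v j))) := by
  classical
  obtain ⟨n, rfl⟩ : ∃ n, m = n + 1 := ⟨m - 1, by omega⟩
  have hn : n ≠ 0 := by omega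
  let e : Module.Basis (Fin (n + 1)) ℝ V := (Module.finBasis ℝ V).reindex (finCongr hV)
  let w : Fin (n + 1) → ⋀[ℝ]^n V := Stmt5Aux.wB n e
  let M : Matrix (Fin (n + 1)) (Fin (n + 1)) ℝ := Matrix.of fun i j => B₂ (w i) (w j)
  have hMsym : M.IsHermitian := by
    rw [Matrix.IsHermitian]
    ext i j
    simp only [M, Matrix.conjTranspose_apply, Matrix.of_apply, star_trivial]
    exact hB₂symm (w j) (w i)
  have hB₂sum : ∀ (c d : Fin (n + 1) → ℝ),
      B₂ (∑ i, c i • w i) (∑ j, d j • w j) = ∑ i, ∑ j, c i * d j * M i j := by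
    intro c d
    have h1 : B₂ (∑ i, c i • w i) = ∑ i, c i • B₂ (w i) := by
      rw [map_sum]
      exact Finset.sum_congr rfl fun i _ => map_smul _ _ _
    rw [h1, LinearMap.sum_apply]
    refine Finset.sum_congr rfl fun i _ => ?_
    rw [LinearMap.smul_apply, map_sum, Finset.smul_sum]
    refine Finset.sum_congr rfl fun j _ => ?_
    rw [map_smul]
    simp only [M, Matrix.of_apply, smul_eq_mul]
    ring
  have hphi_sum : ∀ (c : Fin (n + 1) → ℝ) j, Stmt5Aux.phi n e j (∑ i, c i • w i) = c j := by
    intro c j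
    rw [map_sum]
    have : ∀ i, Stmt5Aux.phi n e j (c i • w i) = c i * (if j = i then 1 else 0) := by
      intro i
      rw [map_smul, Stmt5Aux.phi_wB, smul_eq_mul]
    rw [Finset.sum_congr rfl fun i _ => this i]
    simp
  have hMpos : M.PosDef := by
    refine ⟨hMsym, fun x hx => ?_⟩
    have hxi : (∑ i, x i • w i) ≠ 0 := by
      intro h0
      apply hx
      ext j
      have := hphi_sum x j
      rw [h0, map_zero] at this
      exact this.symm
    have hpos := hB₂pos _ hxi
    rw [hB₂sum] at hpos
    refine lt_of_lt_of_eq hpos (Eq.symm ?_)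
    rw [Finsupp.sum_fintype _ _ (fun i => by simp)]
    refine Finset.sum_congr rfl fun i _ => ?_
    rw [Finsupp.sum_fintype _ _ (fun j => by simp)]
    refine Finset.sum_congr rfl fun j _ => ?_
    rw [star_trivial]
    ring
  set U : Matrix (Fin (n + 1)) (Fin (n + 1)) ℝ :=
    ((hMsym.eigenvectorUnitary : Matrix.unitaryGroup (Fin (n + 1)) ℝ) :
      Matrix (Fin (n + 1)) (Fin (n + 1)) ℝ) with hUdef
  have hU₂ : U * star U = 1 := (Matrix.mem_unitaryGroup_iff).mp hMsym.eigenvectorUnitary.2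
  have hU₁ : star U * U = 1 := (Matrix.mem_unitaryGroup_iff').mp hMsym.eigenvectorUnitary.2
  have hstarU : star U = U.transpose := by
    rw [Matrix.star_eq_conjTranspose]
    ext i j
    rw [Matrix.conjTranspose_apply, Matrix.transpose_apply]
    exact star_trivial _
  set δ : Fin (n + 1) → ℝ := hMsym.eigenvalues with hδdef
  have hδ : ∀ i, 0 < δ i := fun i => hMpos.eigenvalues_pos i
  have hspec : star U * M * U = Matrix.diagonal δ := by
    have := hMsym.conjStarAlgAut_star_eigenvectorUnitary
    simpa [RCLike.ofReal_real_eq_id] using this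
  set E : Matrix (Fin (n + 1)) (Fin (n + 1)) ℝ := Matrix.diagonal fun i => (-1 : ℝ) ^ (i : ℕ)
    with hEdef
  have hEE : E * E = 1 := by
    rw [hEdef, Matrix.diagonal_mul_diagonal]
    have : (fun i : Fin (n+1) => (-1 : ℝ) ^ (i : ℕ) * (-1) ^ (i : ℕ)) = fun _ => 1 := by
      funext i
      rw [← pow_add]
      exact Even.neg_one_pow ⟨(i : ℕ), by ring⟩
    rw [this, Matrix.diagonal_one]
  have hEcancel : ∀ X : Matrix (Fin (n+1)) (Fin (n+1)) ℝ, E * (E * X) = X := by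
    intro X
    rw [← mul_assoc, hEE, one_mul]
  set a : Matrix (Fin (n + 1)) (Fin (n + 1)) ℝ := E * U * E with hadef
  set b : Matrix (Fin (n + 1)) (Fin (n + 1)) ℝ := E * star U * E with hbdef
  have hab : a * b = 1 := by
    rw [hadef, hbdef]
    simp only [mul_assoc]
    rw [hEcancel, ← mul_assoc U, hU₂, one_mul, hEE]
  have hba : b * a = 1 := by
    rw [hadef, hbdef]
    simp only [mul_assoc]
    rw [hEcancel, ← mul_assoc (star U), hU₁, one_mul, hEE]
  have hdetE : E.det * E.det = 1 := by rw [← Matrix.det_mul, hEE, Matrix.det_one]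
  have hdetU2 : U.det * U.det = 1 := by
    have h := congrArg Matrix.det hU₂
    rw [Matrix.det_mul, Matrix.det_one, hstarU, Matrix.det_transpose] at h
    exact h
  have hdeta : a.det = U.det := by
    rw [hadef, Matrix.det_mul, Matrix.det_mul]
    calc E.det * U.det * E.det = E.det * E.det * U.det := by ring
    _ = U.det := by rw [hdetE, one_mul]
  have hadj : a.adjugate = a.det • b := by
    calc a.adjugate = b * (a * a.adjugate) := by rw [← mul_assoc, hba, one_mul]
      _ = b * (a.det • 1) := by rw [Matrix.mul_adjugate]
      _ = a.det • b := by rw [Matrix.mul_smul, mul_one]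
  -- the new basis
  let Aeq : V ≃ₗ[ℝ] V := LinearEquiv.ofLinear (Matrix.toLin e e a) (Matrix.toLin e e b)
    (by rw [← Matrix.toLin_mul, hab, Matrix.toLin_one])
    (by rw [← Matrix.toLin_mul, hba, Matrix.toLin_one])
  let bv : Module.Basis (Fin (n + 1)) ℝ V := e.map Aeq
  have hbv : ∀ q, bv q = ∑ p, a p q • e p := by
    intro q
    show Aeq (e q) = _
    exact Matrix.toLin_self e e a q
  have hrepr : ∀ q p, e.repr (bv q) p = a p q := by
    intro q p
    rw [hbv, map_sum]
    rw [Finsupp.finset_sum_apply]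
    rw [Finset.sum_eq_single p]
    · rw [map_smul, e.repr_self]
      simp
    · intro q' _ hq'
      rw [map_smul, e.repr_self]
      simp [Finsupp.single_apply, hq']
    · intro hmem
      exact absurd (Finset.mem_univ p) hmem
  have hfj_bv : ∀ j i, Stmt5Aux.fj n e j (fun k => bv (i.succAbove k)) = U.det * U j i := by
    intro j i
    rw [Stmt5Aux.fj_apply]
    have hmat : (Matrix.of fun k l => e.repr (bv (i.succAbove k)) (j.succAbove l))
        = (a.submatrix j.succAbove i.succAbove).transpose := by
      ext k l
      simp [hrepr, Matrix.transpose_apply, Matrix.submatrix_apply]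
    rw [hmat, Matrix.det_transpose, Stmt5Aux.submatrix_det_eq_adjugate, hadj]
    rw [Matrix.smul_apply, hdeta]
    have hbij : b i j = (-1 : ℝ) ^ (i : ℕ) * U j i * (-1 : ℝ) ^ (j : ℕ) := by
      rw [hbdef, hstarU, hEdef, Matrix.mul_diagonal, Matrix.diagonal_mul,
        Matrix.transpose_apply]
    rw [hbij]
    have hsgn : (-1 : ℝ) ^ ((i : ℕ) + (j : ℕ)) * ((-1 : ℝ) ^ (i : ℕ) * (-1 : ℝ) ^ (j : ℕ)) = 1 := by
      rw [← pow_add, ← pow_add]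
      exact Even.neg_one_pow ⟨(i : ℕ) + (j : ℕ), by ring⟩
    rw [smul_eq_mul]
    linear_combination (U.det * U j i) * hsgn
  have hwedge_bv : ∀ i, Stmt5Aux.wedgeP' n (fun k => bv (i.succAbove k))
      = ∑ p, (U.det * U p i) • w p := by
    intro i
    rw [Stmt5Aux.wedge_expand n e]
    exact Finset.sum_congr rfl fun p _ => by rw [hfj_bv]
  have hcoreL : ∀ i j, B₂ (Stmt5Aux.wedgeP' n (fun k => bv (i.succAbove k)))
      (Stmt5Aux.wedgeP' n (fun k => bv (j.succAbove k))) = Matrix.diagonal δ i j := by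
    intro i j
    rw [hwedge_bv, hwedge_bv, hB₂sum, ← hspec]
    calc (∑ p, ∑ q, (U.det * U p i) * (U.det * U q j) * M p q)
        = ∑ p, ∑ q, U p i * U q j * M p q := by
          refine Finset.sum_congr rfl fun p _ => Finset.sum_congr rfl fun q _ => ?_
          have h : (U.det * U p i) * (U.det * U q j) * M p q
              = (U.det * U.det) * (U p i * U q j * M p q) := by ring
          rw [h, hdetU2, one_mul]
      _ = (star U * M * U) i j := by
          rw [Matrix.mul_apply, Finset.sum_comm]
          refine Finset.sum_congr rfl fun q _ => ?_
          rw [Matrix.mul_apply, Finset.sum_mul]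
          refine Finset.sum_congr rfl fun p _ => ?_
          rw [hstarU, Matrix.transpose_apply]
          ring
  -- choice of the eigenvalue scalars
  set P : ℝ := ∏ i, δ i with hPdef
  have hPpos : 0 < P := Finset.prod_pos (fun i _ => hδ i)
  set pp : ℝ := P ^ ((n : ℝ)⁻¹) with hppdef
  have hpp : 0 < pp := Real.rpow_pos_of_pos hPpos _
  have hppn : pp ^ n = P := by
    rw [hppdef, ← Real.rpow_natCast (P ^ ((n : ℝ)⁻¹)) n, ← Real.rpow_mul hPpos.le,
      inv_mul_cancel₀ (by exact_mod_cast hn), Real.rpow_one]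
  set lam : Fin (n + 1) → ℝ := fun i => pp / δ i with hlamdef
  have hlam : ∀ i, 0 < lam i := fun i => div_pos hpp (hδ i)
  have hlamprod : ∀ i, ∏ k, lam (i.succAbove k) = δ i := by
    intro i
    have h1 : ∏ p, lam p = pp := by
      rw [hlamdef]
      rw [Finset.prod_div_distrib, Finset.prod_const, Finset.card_univ, Fintype.card_fin,
        ← hPdef, ← hppn, pow_succ]
      field_simp
    have h2 := Fin.prod_univ_succAbove lam i
    rw [h1] at h2
    have h3 : ∏ k, lam (i.succAbove k) = pp / lam i := by
      rw [eq_div_iff (ne_of_gt (hlam i)), mul_comm]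
      exact h2.symm
    rw [h3, hlamdef]
    rw [div_div_eq_mul_div, mul_comm, mul_div_assoc, div_self (ne_of_gt hpp), mul_one]
  -- the bilinear form B
  set B : V →ₗ[ℝ] V →ₗ[ℝ] ℝ := ∑ i, lam i • ((bv.coord i).smulRight (bv.coord i)) with hBdef
  have hBapply : ∀ x y, B x y = ∑ i, lam i * (bv.repr x i * bv.repr y i) := by
    intro x y
    rw [hBdef]
    rw [LinearMap.sum_apply, LinearMap.sum_apply]
    refine Finset.sum_congr rfl fun i _ => ?_
    rw [LinearMap.smul_apply, LinearMap.smul_apply, LinearMap.smulRight_apply]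
    simp [Module.Basis.coord_apply, smul_eq_mul]
  have hBsymm : ∀ x y, B x y = B y x := by
    intro x y
    rw [hBapply, hBapply]
    exact Finset.sum_congr rfl fun i _ => by ring
  have hBpos : ∀ x, x ≠ 0 → 0 < B x x := by
    intro x hx
    rw [hBapply]
    obtain ⟨i, hi⟩ : ∃ i, bv.repr x i ≠ 0 := by
      by_contra h
      push_neg at h
      apply hx
      have : bv.repr x = 0 := Finsupp.ext h
      simpa using congrArg bv.repr.symm this
    refine Finset.sum_pos' (fun i _ => mul_nonneg (hlam i).le (mul_self_nonneg _))
      ⟨i, Finset.mem_univ i, mul_pos (hlam i) (mul_self_pos.mpr hi)⟩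
  have hBbv : ∀ p q, B (bv p) (bv q) = if p = q then lam p else 0 := by
    intro p q
    rw [hBapply]
    rw [Finset.sum_eq_single p]
    · rw [bv.repr_self, bv.repr_self]
      by_cases hpq : p = q
      · simp [Finsupp.single_apply, hpq]
      · rw [if_neg hpq, Finsupp.single_eq_same, Finsupp.single_eq_of_ne hpq]
        ring
    · intro i _ hip
      rw [bv.repr_self]
      simp [Finsupp.single_apply, Ne.symm hip]
    · intro hmem
      exact absurd (Finset.mem_univ p) hmem
  have hcoreR : ∀ i j, Matrix.det (Matrix.of fun k l => B (bv (i.succAbove k)) (bv (j.succAbove l)))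
      = Matrix.diagonal δ i j := by
    intro i j
    by_cases hij : i = j
    · subst hij
      have hmat : (Matrix.of fun k l => B (bv (i.succAbove k)) (bv (i.succAbove l)))
          = Matrix.diagonal (fun k => lam (i.succAbove k)) := by
        ext k l
        rw [Matrix.of_apply, hBbv, Matrix.diagonal_apply]
        by_cases hkl : k = l
        · simp [hkl]
        · rw [if_neg (fun h => hkl (Fin.succAbove_right_injective h)), if_neg hkl]
      rw [hmat, Matrix.det_diagonal, hlamprod, Matrix.diagonal_apply_eq]
    · obtain ⟨k₀, hk₀⟩ := Fin.exists_succAbove_eq (show j ≠ i from fun h => hij h.symm)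
      rw [Matrix.diagonal_apply_ne _ hij]
      apply Matrix.det_eq_zero_of_row_eq_zero k₀
      intro l
      rw [Matrix.of_apply, hk₀, hBbv, if_neg (Ne.symm (Fin.succAbove_ne j l))]
  exact ⟨B, hBsymm, hBpos, fun u v => Stmt5Aux.final n B₂ bv B δ hcoreL hcoreR u v⟩
end

section
/- Let Γ be a compact invariant set for the flow of a C¹ vector field X on a manifold M, and suppose T_Γ M = E ⊕ F is a continuous DX_t-invariant splitting such that E is uniformly contracted (‖DX_t|_{E_x}‖ ≤ C e^{−λt} for t ≥ 0). Then the vector field direction lies in F: X(x) ∈ F_x for all x ∈ Γ. -/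
/-- Let `Γ` be a compact invariant set for the flow `φ` of a `C¹` vector field `X`
(with derivative cocycle `D` over the flow, modelled on `ℝ^m`), and let
`T_Γ M = E ⊕ F` be a continuous `D`-invariant splitting (given by continuous
complementary projections `πE`, `πF`) such that `E` is uniformly contracted:
`‖D_t|_{E_x}‖ ≤ C e^{−λt}` for `t ≥ 0`.  Then the vector field direction lies in `F`:
`X(x) ∈ F_x` for all `x ∈ Γ`. -/
theorem stmt13 {M : Type*} [TopologicalSpace M] (m : ℕ)
    (φ : ℝ → M → M) (hφ0 : ∀ x, φ 0 x = x) (hφadd : ∀ t s x, φ (t + s) x = φ t (φ s x))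
    (hφcont : Continuous fun p : ℝ × M => φ p.1 p.2)
    (Γ : Set M) (hΓcompact : IsCompact Γ) (hΓinv : ∀ x ∈ Γ, ∀ t : ℝ, φ t x ∈ Γ)
    (D : ℝ → M → (EuclideanSpace ℝ (Fin m) →L[ℝ] EuclideanSpace ℝ (Fin m)))
    (hD0 : ∀ x, D 0 x = ContinuousLinearMap.id ℝ (EuclideanSpace ℝ (Fin m)))
    (hDcoc : ∀ t s x, D (t + s) x = (D t (φ s x)).comp (D s x))
    (hDcont : Continuous fun p : ℝ × M => D p.1 p.2)
    (X : M → EuclideanSpace ℝ (Fin m)) (hXcont : Continuous X)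
    (hXD : ∀ x ∈ Γ, ∀ t : ℝ, D t x (X x) = X (φ t x))
    (πE πF : M → (EuclideanSpace ℝ (Fin m) →L[ℝ] EuclideanSpace ℝ (Fin m)))
    (hπEcont : Continuous πE) (hπFcont : Continuous πF)
    (hsum : ∀ x ∈ Γ, πE x + πF x = ContinuousLinearMap.id ℝ (EuclideanSpace ℝ (Fin m)))
    (hEproj : ∀ x ∈ Γ, (πE x).comp (πE x) = πE x)
    (hFproj : ∀ x ∈ Γ, (πF x).comp (πF x) = πF x)
    (hEFzero : ∀ x ∈ Γ, (πE x).comp (πF x) = 0)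
    (hEinv : ∀ x ∈ Γ, ∀ t : ℝ,
      Submodule.map ((D t x) : EuclideanSpace ℝ (Fin m) →ₗ[ℝ] EuclideanSpace ℝ (Fin m))
          (LinearMap.range ((πE x) : EuclideanSpace ℝ (Fin m) →ₗ[ℝ] EuclideanSpace ℝ (Fin m))) =
        LinearMap.range ((πE (φ t x)) : EuclideanSpace ℝ (Fin m) →ₗ[ℝ] EuclideanSpace ℝ (Fin m)))
    (hFinv : ∀ x ∈ Γ, ∀ t : ℝ,
      Submodule.map ((D t x) : EuclideanSpace ℝ (Fin m) →ₗ[ℝ] EuclideanSpace ℝ (Fin m))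
          (LinearMap.range ((πF x) : EuclideanSpace ℝ (Fin m) →ₗ[ℝ] EuclideanSpace ℝ (Fin m))) =
        LinearMap.range ((πF (φ t x)) : EuclideanSpace ℝ (Fin m) →ₗ[ℝ] EuclideanSpace ℝ (Fin m)))
    (C lam : ℝ) (hC : 0 < C) (hlam : 0 < lam)
    (hcontr : ∀ x ∈ Γ, ∀ t ≥ (0 : ℝ), ∀ v : EuclideanSpace ℝ (Fin m),
      v ∈ LinearMap.range ((πE x) : EuclideanSpace ℝ (Fin m) →ₗ[ℝ] EuclideanSpace ℝ (Fin m)) →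
      ‖D t x v‖ ≤ C * Real.exp (-lam * t) * ‖v‖) :
    ∀ x ∈ Γ, X x ∈
      LinearMap.range ((πF x) : EuclideanSpace ℝ (Fin m) →ₗ[ℝ] EuclideanSpace ℝ (Fin m)) := by

  -- a uniform bound on the E-components of X over Γ
  obtain ⟨K, hK⟩ : ∃ K : ℝ, ∀ y ∈ Γ, ‖πE y (X y)‖ ≤ K := by
    obtain ⟨K, hK⟩ := (hΓcompact.image ((hπEcont.clm_apply hXcont).norm)).bddAbove
    exact ⟨K, fun y hy => hK ⟨y, hy, rfl⟩⟩
  intro x hx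
  set e := πE x (X x) with he
  -- the key estimate: ‖e‖ ≤ C e^{-λ t} K for all t ≥ 0
  have key : ∀ t ≥ (0:ℝ), ‖e‖ ≤ C * Real.exp (-lam * t) * K := by
    intro t ht
    set y := φ (-t) x with hy
    have hyΓ : y ∈ Γ := hΓinv x hx _
    have hty : φ t y = x := by rw [hy, ← hφadd, add_neg_cancel, hφ0]
    set w := πE y (X y) with hw
    set f := πF y (X y) with hf
    have hwrange : w ∈ LinearMap.range ((πE y) : EuclideanSpace ℝ (Fin m) →ₗ[ℝ] EuclideanSpace ℝ (Fin m)) :=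
      ⟨X y, rfl⟩
    have hDw : D t y w ∈ LinearMap.range ((πE x) : EuclideanSpace ℝ (Fin m) →ₗ[ℝ] EuclideanSpace ℝ (Fin m)) := by
      rw [← hty, ← hEinv y hyΓ t]
      exact Submodule.mem_map.2 ⟨w, hwrange, rfl⟩
    have hDf : D t y f ∈ LinearMap.range ((πF x) : EuclideanSpace ℝ (Fin m) →ₗ[ℝ] EuclideanSpace ℝ (Fin m)) := by
      rw [← hty, ← hFinv y hyΓ t]
      exact Submodule.mem_map.2 ⟨f, ⟨X y, rfl⟩, rfl⟩
    have hdecy : w + f = X y := by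
      have h := hsum y hyΓ
      have : (πE y + πF y) (X y) = X y := by rw [h]; rfl
      simpa using this
    have hXx : D t y w + D t y f = X x := by
      rw [← map_add, hdecy, hXD y hyΓ t, hty]
    -- apply πE x to the decomposition
    have hπEDw : πE x (D t y w) = D t y w := by
      obtain ⟨u, hu⟩ := hDw
      have h := hEproj x hx
      have h2 : πE x (πE x u) = πE x u := by
        have := congrArg (fun (L : EuclideanSpace ℝ (Fin m) →L[ℝ] EuclideanSpace ℝ (Fin m)) => L u) h
        simpa using this
      rw [← hu]; exact h2
    have hπEDf : πE x (D t y f) = 0 := by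
      obtain ⟨u, hu⟩ := hDf
      have h := hEFzero x hx
      have h2 : πE x (πF x u) = 0 := by
        have := congrArg (fun (L : EuclideanSpace ℝ (Fin m) →L[ℝ] EuclideanSpace ℝ (Fin m)) => L u) h
        simpa using this
      rw [← hu]; exact h2
    have heq : e = D t y w := by
      rw [he, ← hXx, map_add, hπEDw, hπEDf, add_zero]
    rw [heq]
    calc ‖D t y w‖ ≤ C * Real.exp (-lam * t) * ‖w‖ := hcontr y hyΓ t ht w hwrange
      _ ≤ C * Real.exp (-lam * t) * K := by
          apply mul_le_mul_of_nonneg_left (hK y hyΓ)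
          positivity
  -- let t → ∞ to conclude e = 0
  have hlim : Filter.Tendsto (fun t : ℝ => C * Real.exp (-lam * t) * K) Filter.atTop (nhds 0) := by
    have h1 : Filter.Tendsto (fun t : ℝ => Real.exp (-lam * t)) Filter.atTop (nhds 0) := by
      have h2 : Filter.Tendsto (fun t : ℝ => -lam * t) Filter.atTop Filter.atBot :=
        Filter.Tendsto.const_mul_atTop_of_neg (neg_lt_zero.2 hlam) Filter.tendsto_id
      exact Real.tendsto_exp_atBot.comp h2
    have := (h1.const_mul C).mul_const K
    simpa using this
  have hle : ‖e‖ ≤ 0 := by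
    apply ge_of_tendsto hlim
    filter_upwards [Filter.eventually_ge_atTop 0] with t ht using key t ht
  have he0 : e = 0 := norm_le_zero_iff.1 hle
  -- conclude
  have hdec : πE x (X x) + πF x (X x) = X x := by
    have h := hsum x hx
    have : (πE x + πF x) (X x) = X x := by rw [h]; rfl
    simpa using this
  have hE0 : πE x (X x) = 0 := by rw [← he]; exact he0
  have hfin : πF x (X x) = X x := by
    nth_rewrite 2 [← hdec]
    rw [hE0, zero_add]
  exact ⟨X x, hfin⟩
end
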